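/- Let (Z,W) be in the quantum conservative hyperbola of type r > 1 on a Hilbert space H: ZW = WZ = r⁻²I, ‖Z‖ < 1, ‖W‖ < 1. Let Z = UA be the polar decomposition (U unitary, A positive), Â = r⁻²A⁻¹ so that W = ÂU*, and set H₀ = U·((1 + r⁻²)²I − (A + Â)²)^{1/2}. Define on H ⊕ H the operators Ẑ = [[Z, H₀],[0, W*]] and Ŵ = [[W, −H₀*],[0, Z*]]. Then Ẑ Ŵ = Ŵ Ẑ = r⁻²·I (on H ⊕ H). -/

import Mathlib

open ContinuousLinearMap

variable {H : Type*} [NormedAddCommGroup H] [InnerProductSpace ℂ H] [CompleteSpace H]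

/-- The block operator `[[A, B],[C, D]]` acting on the Hilbert-space direct sum
`H ⊕ H = WithLp 2 (H × H)`. -/
noncomputable def blockOp (A B C D : H →L[ℂ] H) :
    WithLp 2 (H × H) →L[ℂ] WithLp 2 (H × H) :=
  ((WithLp.prodContinuousLinearEquiv 2 ℂ H H).symm : H × H →L[ℂ] WithLp 2 (H × H)) ∘L
    ((A ∘L fst ℂ H H + B ∘L snd ℂ H H).prod (C ∘L fst ℂ H H + D ∘L snd ℂ H H)) ∘L
    ((WithLp.prodContinuousLinearEquiv 2 ℂ H H) : WithLp 2 (H × H) →L[ℂ] H × H)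

lemma blockOp_mul (A B C D A' B' C' D' : H →L[ℂ] H) :
    blockOp A B C D * blockOp A' B' C' D' =
      blockOp (A*A'+B*C') (A*B'+B*D') (C*A'+D*C') (C*B'+D*D') := by
  ext x
  simp [blockOp, mul_apply, map_add, add_comm, add_left_comm, add_assoc]

lemma blockOp_smul_one (c : ℂ) :
    blockOp (c • 1) 0 0 (c • 1) = c • (1 : WithLp 2 (H × H) →L[ℂ] WithLp 2 (H × H)) := by
  ext x
  simp [blockOp]
  rfl

/-- With `(Z,W)` in the quantum conservative hyperbola of type `r > 1`,
`Z = UA` the polar decomposition, `Â = r⁻²A⁻¹` (so `W = ÂU*`), `S` the positive square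
root of `(1+r⁻²)²I − (A+Â)²` (which commutes with `A` and `Â`), and `H₀ = U S`, the block
operators `Ẑ = [[Z, H₀],[0, W*]]` and `Ŵ = [[W, −H₀*],[0, Z*]]` on `H ⊕ H` satisfy
`Ẑ Ŵ = Ŵ Ẑ = r⁻² I`. -/
theorem stmt8 (r : ℝ) (hr : 1 < r) (Z W U A S : H →L[ℂ] H)
    (hZW : Z * W = (((r : ℂ)) ^ 2)⁻¹ • (1 : H →L[ℂ] H))
    (hWZ : W * Z = (((r : ℂ)) ^ 2)⁻¹ • (1 : H →L[ℂ] H))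
    (hZ : ‖Z‖ < 1) (hW : ‖W‖ < 1)
    (hUl : adjoint U * U = 1) (hUr : U * adjoint U = 1)
    (hA : A.IsPositive) (hAunit : IsUnit A) (hpolar : Z = U * A)
    (hpolarW : W = ((((r ^ 2)⁻¹ : ℝ) : ℂ) • Ring.inverse A) * adjoint U)
    (hS : S.IsPositive)
    (hSsq : S ^ 2 = (((1 + (r ^ 2)⁻¹) ^ 2 : ℝ) : ℂ) • (1 : H →L[ℂ] H)
      - (A + (((r ^ 2)⁻¹ : ℝ) : ℂ) • Ring.inverse A) ^ 2)
    (hSA : Commute S A) :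
    blockOp Z (U * S) 0 (adjoint W) * blockOp W (-(adjoint (U * S))) 0 (adjoint Z)
        = (((r : ℂ)) ^ 2)⁻¹ • (1 : WithLp 2 (H × H) →L[ℂ] WithLp 2 (H × H)) ∧
    blockOp W (-(adjoint (U * S))) 0 (adjoint Z) * blockOp Z (U * S) 0 (adjoint W)
        = (((r : ℂ)) ^ 2)⁻¹ • (1 : WithLp 2 (H × H) →L[ℂ] WithLp 2 (H × H)) := by
  set c : ℂ := (((r : ℂ)) ^ 2)⁻¹ with hc
  set B : H →L[ℂ] H := Ring.inverse A with hB
  have hc' : ((((r ^ 2)⁻¹ : ℝ)) : ℂ) = c := by rw [hc]; push_cast; ring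
  have hstarc : star c = c := by rw [← hc']; simp
  have hAs : star A = A := hA.isSelfAdjoint.star_eq
  have hSs : star S = S := hS.isSelfAdjoint.star_eq
  have hBs : star B = B := by rw [hB, ← Ring.inverse_star, hAs]
  have hABo : A * B = 1 := Ring.mul_inverse_cancel A hAunit
  have hBAo : B * A = 1 := Ring.inverse_mul_cancel A hAunit
  have hSB : S * B = B * S := by
    calc S * B = B * A * (S * B) := by rw [hBAo, one_mul]
    _ = B * ((A * S) * B) := by simp only [mul_assoc]
    _ = B * ((S * A) * B) := by rw [hSA.eq]
    _ = B * S * (A * B) := by simp only [mul_assoc]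
    _ = B * S := by rw [hABo, mul_one]
  simp only [← ContinuousLinearMap.star_eq_adjoint] at hUl hUr hpolarW ⊢
  rw [hc'] at hpolarW
  have hWstar : star W = c • (U * B) := by
    rw [hpolarW, star_mul, star_star, star_smul, hBs, hstarc, mul_smul_comm]
  have hZstar : star Z = A * star U := by rw [hpolar, star_mul, hAs]
  have hUSstar : star (U * S) = S * star U := by rw [star_mul, hSs]
  -- entries of the first product
  have e11 : Z * W + (U * S) * 0 = c • 1 := by rw [mul_zero, add_zero, hZW]
  have key : Z * star (U * S) = (U * S) * star Z := by
    rw [hUSstar, hZstar, hpolar]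
    calc U * A * (S * star U) = U * ((A * S) * star U) := by simp only [mul_assoc]
    _ = U * ((S * A) * star U) := by rw [hSA.eq]
    _ = U * S * (A * star U) := by simp only [mul_assoc]
  have e12 : Z * (-(star (U * S))) + (U * S) * star Z = 0 := by
    rw [mul_neg, key, neg_add_cancel]
  have e21 : (0 : H →L[ℂ] H) * W + star W * 0 = 0 := by simp
  have e22 : (0 : H →L[ℂ] H) * (-(star (U * S))) + star W * star Z = c • 1 := by
    rw [zero_mul, zero_add, ← star_mul, hZW, star_smul, star_one, hstarc]
  -- entries of the second product
  have e11' : W * Z + (-(star (U * S))) * 0 = c • 1 := by rw [mul_zero, add_zero, hWZ]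
  have key1 : W * (U * S) = c • (B * S) := by
    rw [hpolarW]
    calc (c • B) * star U * (U * S) = c • (B * (star U * U * S)) := by
          simp only [smul_mul_assoc, mul_assoc]
    _ = c • (B * S) := by rw [hUl, one_mul]
  have key2 : star (U * S) * star W = c • (B * S) := by
    rw [hUSstar, hWstar]
    calc (S * star U) * (c • (U * B)) = c • (S * (star U * U * B)) := by
          simp only [mul_smul_comm, mul_assoc]
    _ = c • (S * B) := by rw [hUl, one_mul]
    _ = c • (B * S) := by rw [hSB]
  have e12' : W * (U * S) + (-(star (U * S))) * star W = 0 := by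
    rw [neg_mul, key1, key2, add_neg_cancel]
  have e21' : (0 : H →L[ℂ] H) * Z + star Z * 0 = 0 := by simp
  have e22' : (0 : H →L[ℂ] H) * (U * S) + star Z * star W = c • 1 := by
    rw [zero_mul, zero_add, ← star_mul, hWZ, star_smul, star_one, hstarc]
  constructor
  · rw [blockOp_mul, e11, e12, e21, e22, blockOp_smul_one]
  · rw [blockOp_mul, e11', e12', e21', e22', blockOp_smul_one]
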